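/- Let k be a field of characteristic 2 and U = u(m) as above. Then every 2-dimensional U-module is trivial, i.e., a, b, c act as zero. -/

import Mathlib

/-- Every 2-dimensional module over u(m) (characteristic 2) is trivial:
a, b, c act by the zero endomorphism. -/
theorem um_two_dim_module_trivial (k : Type*) [Field k] [IsAlgClosed k] [CharP k 2]
    (V : Type*) [AddCommGroup V] [Module k V] [FiniteDimensional k V]
    (hdim : Module.finrank k V = 2)
    (A B C : Module.End k V)
    (hab : A*B + B*A = C) (hac : A*C + C*A = A) (hbc : B*C + C*B = B)
    (ha4 : A^4 = 0) (hb4 : B^4 = 0) (hc2 : C^2 = C) :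
    A = 0 ∧ B = 0 ∧ C = 0 := by
  classical
  let b : Module.Basis (Fin 2) k V := Module.finBasisOfFinrankEq k V hdim
  let e : Module.End k V ≃ₐ[k] Matrix (Fin 2) (Fin 2) k := LinearMap.toMatrixAlgEquiv b
  set MA := e A with hMA
  set MB := e B with hMB
  set MC := e C with hMC
  have eab : MA * MB + MB * MA = MC := by
    simpa [map_add, map_mul] using congrArg e hab
  have eac : MA * MC + MC * MA = MA := by
    simpa [map_add, map_mul] using congrArg e hac
  have ebc : MB * MC + MC * MB = MB := by
    simpa [map_add, map_mul] using congrArg e hbc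
  have ec2 : MC * MC = MC := by
    have := congrArg e hc2
    simpa [pow_two, map_mul] using this
  -- trace of MC is zero
  have htr : MC 0 0 + MC 1 1 = 0 := by
    have h1 : Matrix.trace MC = 0 := by
      rw [← eab, Matrix.trace_add, Matrix.trace_mul_comm MA MB]
      exact CharTwo.add_self_eq_zero _
    simpa [Matrix.trace, Fin.sum_univ_two] using h1
  have hchar : (2:k) = 0 := CharTwo.two_eq_zero
  have h11 : MC 1 1 = MC 0 0 := by
    linear_combination htr - MC 0 0 * hchar
  -- off-diagonal entries vanish
  have h01 : MC 0 1 = 0 := by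
    have := congrFun (congrFun ec2 0) 1
    rw [Matrix.mul_apply, Fin.sum_univ_two] at this
    rw [h11] at this
    have h2 : MC 0 0 * MC 0 1 + MC 0 0 * MC 0 1 = MC 0 1 := by
      linear_combination this
    rwa [CharTwo.add_self_eq_zero, eq_comm] at h2
  have h10 : MC 1 0 = 0 := by
    have := congrFun (congrFun ec2 1) 0
    rw [Matrix.mul_apply, Fin.sum_univ_two] at this
    rw [h11] at this
    have h2 : MC 0 0 * MC 1 0 + MC 0 0 * MC 1 0 = MC 1 0 := by
      linear_combination this
    rwa [CharTwo.add_self_eq_zero, eq_comm] at h2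
  have h00 : MC 0 0 * MC 0 0 = MC 0 0 := by
    have := congrFun (congrFun ec2 0) 0
    rw [Matrix.mul_apply, Fin.sum_univ_two, h01, h10] at this
    simpa using this
  have hcase : MC 0 0 = 0 ∨ MC 0 0 = 1 := by
    have : MC 0 0 * (MC 0 0 - 1) = 0 := by ring_nf; linear_combination h00
    rcases mul_eq_zero.mp this with h | h
    · exact Or.inl h
    · exact Or.inr (by linear_combination h)
  -- helper to show MC is a scalar
  have hscalar : ∀ (x : k), MC 0 0 = x → MC = x • (1 : Matrix (Fin 2) (Fin 2) k) := by
    intro x hx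
    ext i j
    fin_cases i <;> fin_cases j <;>
      simp [Matrix.one_apply, h01, h10, h11, hx]
  rcases hcase with h | h
  · -- MC = 0
    have hC0 : MC = 0 := by simpa using hscalar 0 h
    have hA0 : MA = 0 := by rw [hC0] at eac; simpa using eac.symm
    have hB0 : MB = 0 := by rw [hC0] at ebc; simpa using ebc.symm
    refine ⟨e.injective ?_, e.injective ?_, e.injective ?_⟩ <;>
      simp [← hMA, ← hMB, ← hMC, hA0, hB0, hC0]
  · -- MC = 1 : derive a contradiction
    exfalso
    have hC1 : MC = 1 := by simpa using hscalar 1 h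
    have hA0 : MA = 0 := by
      rw [hC1, mul_one, one_mul, CharTwo.add_self_eq_zero] at eac
      exact eac.symm
    have hB0 : MB = 0 := by
      rw [hC1, mul_one, one_mul, CharTwo.add_self_eq_zero] at ebc
      exact ebc.symm
    rw [hA0, hB0, hC1] at eab
    simp at eab
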